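/- Let n ≥ 1. For every j ∈ ℕ and every x ∈ [0,1] one has Φ_{n,j}(x) = Φ_{n,j}(1−x). -/

import Mathlib

open Real MeasureTheory Filter

noncomputable section

/-- The perturbing sequence: `c j = 1` if `n ∣ j`, else `0`. -/
def pert (n j : ℕ) : ℕ := if n ∣ j then 1 else 0

/-- The lacunary trigonometric product `Π_{r,γ}(α) = ∏_{j<r} |cos(2^j α π + γ_j π/2)|`. -/
def PiProd (r : ℕ) (γ : ℕ → ℕ) (α : ℝ) : ℝ :=
  ∏ j ∈ Finset.range r, |Real.cos (2 ^ j * α * π + γ j * π / 2)|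

/-- The functions `Φ_{n,j}` defined recursively by `Φ_{n,0} = 1` and
`Φ_{n,j+1}(x) = 2^{-n} Σ_{k<2^n} Π_{n,c}((x+k)/2^n) · Φ_{n,j}((x+k)/2^n)`. -/
def Phi (n : ℕ) : ℕ → ℝ → ℝ
  | 0, _ => 1
  | j + 1, x => ((2:ℝ) ^ n)⁻¹ * ∑ k ∈ Finset.range (2 ^ n),
      PiProd n (pert n) ((x + k) / 2 ^ n) * Phi n j ((x + k) / 2 ^ n)

lemma abs_cos_nat_pi_sub (m : ℕ) (θ : ℝ) : |Real.cos (m * π - θ)| = |Real.cos θ| := by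
  rw [Real.cos_nat_mul_pi_sub, abs_mul, abs_pow, abs_neg, abs_one, one_pow, one_mul]

lemma PiProd_one_sub (n : ℕ) (y : ℝ) :
    PiProd n (pert n) (1 - y) = PiProd n (pert n) y := by
  unfold PiProd
  refine Finset.prod_congr rfl fun j _ => ?_
  have h2 : ((2:ℝ) ^ j) = ((2 ^ j : ℕ) : ℝ) := by push_cast; ring
  rcases Nat.eq_zero_or_pos (pert n j) with h | h
  · rw [h]
    have : (2:ℝ) ^ j * (1 - y) * π + (0:ℕ) * π / 2
        = (2 ^ j : ℕ) * π - 2 ^ j * y * π := by push_cast; ring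
    rw [this, abs_cos_nat_pi_sub]
    norm_num
  · have h1 : pert n j = 1 := by unfold pert at h ⊢; split at h <;> simp_all
    rw [h1]
    have : (2:ℝ) ^ j * (1 - y) * π + (1:ℕ) * π / 2
        = (2 ^ j : ℕ) * π - (2 ^ j * y * π - π / 2) := by push_cast; ring
    rw [this, abs_cos_nat_pi_sub]
    have e1 : (2:ℝ) ^ j * y * π - π / 2 = -(π / 2 - 2 ^ j * y * π) := by ring
    have e2 : (2:ℝ) ^ j * y * π + (1:ℕ) * π / 2 = π / 2 + 2 ^ j * y * π := by push_cast; ring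
    rw [e1, Real.cos_neg, Real.cos_pi_div_two_sub, e2, Real.cos_add]
    simp

/-- Symmetry: `Φ_{n,j}(x) = Φ_{n,j}(1-x)` for all `x ∈ [0,1]`. -/
theorem Phi_symm (n : ℕ) (hn : 1 ≤ n) (j : ℕ) (x : ℝ) (hx : x ∈ Set.Icc (0:ℝ) 1) :
    Phi n j x = Phi n j (1 - x) := by
  induction j generalizing x with
  | zero => simp [Phi]
  | succ j ih =>
    simp only [Phi]
    congr 1
    rw [← Finset.sum_range_reflect
      (fun k => PiProd n (pert n) ((1 - x + k) / 2 ^ n) * Phi n j ((1 - x + k) / 2 ^ n)) (2 ^ n)]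
    refine Finset.sum_congr rfl fun k hk => ?_
    have hk' : k < 2 ^ n := Finset.mem_range.mp hk
    have hcast : ((2 ^ n - 1 - k : ℕ) : ℝ) = (2 ^ n : ℝ) - 1 - k := by
      have h1 : k + 1 ≤ 2 ^ n := hk'
      rw [Nat.sub_sub, Nat.cast_sub (by omega : 1 + k ≤ 2 ^ n)]
      push_cast; ring
    have hne : ((2:ℝ) ^ n) ≠ 0 := by positivity
    have key : (1 - x + ((2 ^ n - 1 - k : ℕ) : ℝ)) / 2 ^ n = 1 - (x + k) / 2 ^ n := by
      rw [hcast]; field_simp; ring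
    have hy : (x + k) / 2 ^ n ∈ Set.Icc (0:ℝ) 1 := by
      obtain ⟨hx0, hx1⟩ := hx
      constructor
      · positivity
      · rw [div_le_one (by positivity)]
        have : (k : ℝ) ≤ (2:ℝ) ^ n - 1 := by
          have : (k : ℝ) + 1 ≤ ((2 ^ n : ℕ) : ℝ) := by exact_mod_cast hk'
          push_cast at this; linarith
        linarith
    simp only [key]
    rw [PiProd_one_sub, ← ih _ hy]
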